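/- For the dissipated rigid body system ξ⁰: ẋ = Π₋∇H + G∇C₀ with I₁ > I₂ > I₃ > 0, the set of equilibria of ξ⁰ coincides with the set of equilibria of the free rigid body (the union of the three coordinate axes). -/
import Mathlib

private lemma aux_sum_sq_zero {A B C a b c : ℝ} (hA : 0 < A) (hB : 0 < B) (hC : 0 < C)
    (ha : 0 ≤ a) (hb : 0 ≤ b) (hc : 0 ≤ c) (h : A*a + B*b + C*c = 0) :
    a = 0 ∧ b = 0 ∧ c = 0 := by
  have h1 : A*a = 0 := le_antisymm (by nlinarith [mul_nonneg hB.le hb, mul_nonneg hC.le hc]) (mul_nonneg hA.le ha)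
  have h2 : B*b = 0 := le_antisymm (by nlinarith [mul_nonneg hA.le ha, mul_nonneg hC.le hc]) (mul_nonneg hB.le hb)
  have h3 : C*c = 0 := le_antisymm (by nlinarith [mul_nonneg hA.le ha, mul_nonneg hB.le hb]) (mul_nonneg hC.le hc)
  refine ⟨?_, ?_, ?_⟩
  · rcases mul_eq_zero.mp h1 with h' | h'
    · exact absurd h' hA.ne'
    · exact h'
  · rcases mul_eq_zero.mp h2 with h' | h'
    · exact absurd h' hB.ne'
    · exact h'
  · rcases mul_eq_zero.mp h3 with h' | h'
    · exact absurd h' hC.ne'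
    · exact h'

/-- For the dissipated rigid body system
`ξ⁰ : ẋᵢ = (Euler term)ᵢ + u⁰ᵢ` with `I₁ > I₂ > I₃ > 0`, the set of equilibria of `ξ⁰`
coincides with the set of equilibria of the free rigid body (the union of the three
coordinate axes). -/
theorem dissipated_rigid_body_equilibria
    (I1 I2 I3 : ℝ) (h12 : I1 > I2) (h23 : I2 > I3) (h3 : I3 > 0) :
    {p : ℝ × ℝ × ℝ |
        (1/I3 - 1/I2) * p.2.1 * p.2.2
          + p.1 * ((1/I1 - 1/I2) * p.2.1^2/I2 + (1/I1 - 1/I3) * p.2.2^2/I3) = 0 ∧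
        (1/I1 - 1/I3) * p.1 * p.2.2
          + p.2.1 * ((1/I2 - 1/I1) * p.1^2/I1 + (1/I2 - 1/I3) * p.2.2^2/I3) = 0 ∧
        (1/I2 - 1/I1) * p.1 * p.2.1
          + p.2.2 * ((1/I3 - 1/I1) * p.1^2/I1 + (1/I3 - 1/I2) * p.2.1^2/I2) = 0}
      = {p : ℝ × ℝ × ℝ | p.2.1 = 0 ∧ p.2.2 = 0}
        ∪ {p : ℝ × ℝ × ℝ | p.1 = 0 ∧ p.2.2 = 0}
        ∪ {p : ℝ × ℝ × ℝ | p.1 = 0 ∧ p.2.1 = 0} := by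
  have h2 : (0:ℝ) < I2 := lt_trans h3 h23
  have h1 : (0:ℝ) < I1 := lt_trans h2 h12
  have hab : 1/I1 < 1/I2 := one_div_lt_one_div_of_lt h2 h12
  have hbc : 1/I2 < 1/I3 := one_div_lt_one_div_of_lt h3 h23
  ext ⟨x, y, z⟩
  simp only [Set.mem_setOf_eq, Set.mem_union]
  constructor
  · rintro ⟨e1, e2, e3⟩
    have key : (1/I2 - 1/I1)^2 * (x*y)^2 + (1/I3 - 1/I1)^2 * (x*z)^2
        + (1/I3 - 1/I2)^2 * (y*z)^2 = 0 := by
      linear_combination (-x)*e1 + (-y)*e2 + (-z)*e3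
    have hA : (0:ℝ) < (1/I2 - 1/I1)^2 := by
      have := sub_pos.mpr hab; positivity
    have hB : (0:ℝ) < (1/I3 - 1/I1)^2 := by
      have := sub_pos.mpr (hab.trans hbc); positivity
    have hC : (0:ℝ) < (1/I3 - 1/I2)^2 := by
      have := sub_pos.mpr hbc; positivity
    obtain ⟨k1, k2, k3⟩ := aux_sum_sq_zero hA hB hC (sq_nonneg (x*y)) (sq_nonneg (x*z))
      (sq_nonneg (y*z)) key
    have hxy : x * y = 0 := pow_eq_zero_iff (two_ne_zero) |>.mp k1
    have hxz : x * z = 0 := pow_eq_zero_iff (two_ne_zero) |>.mp k2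
    have hyz : y * z = 0 := pow_eq_zero_iff (two_ne_zero) |>.mp k3
    rcases mul_eq_zero.mp hxy with hx | hy
    · rcases mul_eq_zero.mp hyz with hy | hz
      · exact Or.inr ⟨hx, hy⟩
      · exact Or.inl (Or.inr ⟨hx, hz⟩)
    · rcases mul_eq_zero.mp hxz with hx | hz
      · exact Or.inr ⟨hx, hy⟩
      · exact Or.inl (Or.inl ⟨hy, hz⟩)
  · rintro ((⟨hy, hz⟩ | ⟨hx, hz⟩) | ⟨hx, hy⟩)
    · subst hy; subst hz; exact ⟨by ring, by ring, by ring⟩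
    · subst hx; subst hz; exact ⟨by ring, by ring, by ring⟩
    · subst hx; subst hy; exact ⟨by ring, by ring, by ring⟩
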